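/- arXiv:2605.15173 — 2 statements merged into one kernel-verified Lean document; each statement's English description precedes it below -/
import Mathlib

section
/- Let Y₁,…,Yₙ be independent and identically distributed geometric random variables with success probability p ∈ (0,1] and support {1,2,3,…}, and let Y = Y₁+⋯+Yₙ, so that E[Y] = n/p. Then for every real k ≥ 1, P[Y ≥ k·E[Y]] ≤ exp(−k·n·(1−1/k)²/2). -/
open scoped ENNReal NNReal

open MeasureTheory ProbabilityTheory

/-- `log (1 - x) ≤ -x - x²/2` for `0 ≤ x < 1`. -/
lemma aux_log_one_sub {x : ℝ} (h0 : 0 ≤ x) (h1 : x < 1) :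
    Real.log (1 - x) ≤ -x - x ^ 2 / 2 := by
  have hd : ∀ y ∈ Set.Ioo (0:ℝ) x, HasDerivAt (fun y : ℝ => Real.log (1 - y) + y + y ^ 2 / 2)
      ((1 - y)⁻¹ * (0 - 1) + 1 + (2 * y ^ 1) / 2) y := by
    intro y hy
    have hy1 : y < 1 := lt_of_lt_of_le hy.2 h1.le
    have hne : (1 : ℝ) - y ≠ 0 := by intro hc; rw [sub_eq_zero] at hc; linarith
    refine HasDerivAt.add (HasDerivAt.add ?_ (hasDerivAt_id y)) ?_
    · exact (Real.hasDerivAt_log hne).comp y ((hasDerivAt_const y 1).sub (hasDerivAt_id y))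
    · exact (hasDerivAt_pow 2 y).div_const 2
  have h : AntitoneOn (fun y : ℝ => Real.log (1 - y) + y + y ^ 2 / 2) (Set.Icc 0 x) := by
    apply antitoneOn_of_deriv_nonpos (convex_Icc 0 x)
    · refine ContinuousOn.add (ContinuousOn.add ?_ continuousOn_id)
        ((continuousOn_id.pow 2).div_const 2)
      refine ContinuousOn.log (continuousOn_const.sub continuousOn_id) fun y hy => ?_
      have : y < 1 := lt_of_le_of_lt hy.2 h1
      intro hc; rw [sub_eq_zero] at hc; linarith
    · intro y hy
      rw [interior_Icc] at hy
      exact ((hd y hy).differentiableAt).differentiableWithinAt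
    · intro y hy
      rw [interior_Icc] at hy
      rw [(hd y hy).deriv]
      have hy1 : y < 1 := lt_of_lt_of_le hy.2 h1.le
      have h1y : (0:ℝ) < 1 - y := by linarith
      have hne : (1 : ℝ) - y ≠ 0 := ne_of_gt h1y
      have hinv : (1 - y) * (1 - y)⁻¹ = 1 := mul_inv_cancel₀ hne
      have hinv0 : 0 ≤ (1 - y)⁻¹ := inv_nonneg.mpr h1y.le
      have hy0 : 0 < y := hy.1
      nlinarith [mul_nonneg (mul_nonneg hy0.le hy0.le) hinv0]
  have h0m : (0:ℝ) ∈ Set.Icc 0 x := ⟨le_refl 0, h0⟩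
  have hxm : x ∈ Set.Icc 0 x := ⟨h0, le_refl x⟩
  have := h h0m hxm h0
  simp only [Real.log_one, sub_zero] at this
  norm_num at this
  linarith

/-- `log k ≤ k/2 - 1/(2k)` for `k ≥ 1`. -/
lemma aux_log_le {k : ℝ} (hk : 1 ≤ k) :
    Real.log k ≤ k / 2 - 1 / 2 * k⁻¹ := by
  have hd : ∀ y ∈ Set.Ioo (1:ℝ) k, HasDerivAt (fun y : ℝ => y / 2 - 1 / 2 * y⁻¹ - Real.log y)
      (1 / 2 - 1 / 2 * (-(y ^ 2)⁻¹) - y⁻¹) y := by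
    intro y hy
    have hy0 : 0 < y := lt_trans one_pos hy.1
    have hne : y ≠ 0 := ne_of_gt hy0
    refine HasDerivAt.sub (HasDerivAt.sub ?_ ?_) (Real.hasDerivAt_log hne)
    · exact (hasDerivAt_id y).div_const 2
    · exact (hasDerivAt_inv hne).const_mul (1/2)
  have h : MonotoneOn (fun y : ℝ => y / 2 - 1 / 2 * y⁻¹ - Real.log y) (Set.Icc 1 k) := by
    apply monotoneOn_of_deriv_nonneg (convex_Icc 1 k)
    · refine ContinuousOn.sub (ContinuousOn.sub (continuousOn_id.div_const 2) ?_) ?_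
      · exact continuousOn_const.mul (ContinuousOn.inv₀ continuousOn_id fun y hy =>
          ne_of_gt (lt_of_lt_of_le one_pos hy.1))
      · refine Real.continuousOn_log.mono fun y hy => ?_
        have : (1:ℝ) ≤ y := hy.1
        simp only [Set.mem_compl_iff, Set.mem_singleton_iff]
        intro hc; rw [hc] at this; linarith
    · intro y hy
      rw [interior_Icc] at hy
      exact ((hd y hy).differentiableAt).differentiableWithinAt
    · intro y hy
      rw [interior_Icc] at hy
      rw [(hd y hy).deriv]
      have hy1 : 1 < y := hy.1
      have hy0 : 0 < y := by linarith
      have hne : y ≠ 0 := ne_of_gt hy0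
      have h2 : (y ^ 2) * (y ^ 2)⁻¹ = 1 := mul_inv_cancel₀ (pow_ne_zero 2 hne)
      have h3 : y * y⁻¹ = 1 := mul_inv_cancel₀ hne
      nlinarith [sq_nonneg (y - 1), inv_nonneg.mpr hy0.le,
        inv_nonneg.mpr (sq_nonneg y), mul_pos hy0 hy0]
  have h1m : (1:ℝ) ∈ Set.Icc 1 k := ⟨le_refl 1, hk⟩
  have hkm : k ∈ Set.Icc 1 k := ⟨hk, le_refl k⟩
  have := h h1m hkm hk
  simp only [Real.log_one] at this
  norm_num at this
  linarith

/-- MGF computation for a geometric random variable. -/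
lemma geom_mgf {Ω : Type*} [MeasurableSpace Ω] (μ : Measure Ω) [IsProbabilityMeasure μ]
    (p : ℝ) (hp0 : 0 < p) (hp1 : p ≤ 1) (W : Ω → ℕ) (hW : Measurable W)
    (hg : ∀ j : ℕ, 1 ≤ j → μ {ω | W ω = j} = ENNReal.ofReal ((1 - p) ^ (j - 1) * p))
    (s : ℝ) (hs1 : 1 ≤ s) (hq : (1 - p) * s < 1) :
    Integrable (fun ω => Real.exp (Real.log s * (W ω : ℝ))) μ ∧
      ∫ ω, Real.exp (Real.log s * (W ω : ℝ)) ∂μ = p * s / (1 - (1 - p) * s) := by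
  have hs0 : (0:ℝ) < s := lt_of_lt_of_le one_pos hs1
  have hexp : ∀ m : ℕ, Real.exp (Real.log s * (m : ℝ)) = s ^ m := by
    intro m
    rw [mul_comm, Real.exp_nat_mul, Real.exp_log hs0]
  set ν : Measure ℕ := μ.map W with hν
  have hνprob : IsProbabilityMeasure ν := Measure.isProbabilityMeasure_map hW.aemeasurable
  have hνj : ∀ j : ℕ, ν {j + 1} = ENNReal.ofReal ((1 - p) ^ j * p) := by
    intro j
    rw [hν, Measure.map_apply hW (measurableSet_singleton _)]
    have hpre : W ⁻¹' {j + 1} = {ω | W ω = j + 1} := rfl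
    rw [hpre, hg (j + 1) (Nat.le_add_left 1 j)]
    simp
  have hq0 : (0:ℝ) ≤ (1 - p) * s := mul_nonneg (by linarith) hs0.le
  have h1q : (0:ℝ) < 1 - (1 - p) * s := by linarith
  have h1p0 : (0:ℝ) ≤ 1 - p := by linarith
  have h1p1 : 1 - p < 1 := by linarith
  -- the sum of geometric masses is 1
  have hsum1 : ∑' j : ℕ, ν {j + 1} = 1 := by
    have hsummable : Summable (fun j : ℕ => (1 - p) ^ j * p) :=
      (summable_geometric_of_lt_one h1p0 h1p1).mul_right p
    have : ∑' j : ℕ, ((1 - p) ^ j * p) = 1 := by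
      rw [tsum_mul_right, tsum_geometric_of_lt_one h1p0 h1p1]
      field_simp
      rw [sub_sub_cancel, div_self hp0.ne']
    calc ∑' j : ℕ, ν {j + 1} = ∑' j : ℕ, ENNReal.ofReal ((1 - p) ^ j * p) := by
          simp_rw [hνj]
      _ = ENNReal.ofReal (∑' j : ℕ, ((1 - p) ^ j * p)) :=
          (ENNReal.ofReal_tsum_of_nonneg
            (fun j => mul_nonneg (pow_nonneg h1p0 j) hp0.le) hsummable).symm
      _ = 1 := by rw [this, ENNReal.ofReal_one]
  have hν0 : ν {0} = 0 := by
    have htot : ∑' m : ℕ, ν {m} = 1 := by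
      have := Measure.tsum_indicator_apply_singleton ν Set.univ MeasurableSet.univ
      simpa using this
    rw [tsum_eq_zero_add' ENNReal.summable, hsum1] at htot
    calc ν {0} = ν {0} + 1 - 1 := (ENNReal.add_sub_cancel_right ENNReal.one_ne_top).symm
      _ = 1 - 1 := by rw [htot]
      _ = 0 := by simp
  -- summability of the real series
  set f : ℕ → ℝ := fun m => (ν {m}).toReal * s ^ m with hf
  have hfj : ∀ j : ℕ, f (j + 1) = (p * s) * ((1 - p) * s) ^ j := by
    intro j
    rw [hf]
    simp only
    rw [hνj j, ENNReal.toReal_ofReal (mul_nonneg (pow_nonneg h1p0 j) hp0.le)]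
    rw [mul_pow, pow_succ]
    ring
  have hf0 : f 0 = 0 := by rw [hf]; simp [hν0]
  have hfsummable : Summable f := by
    rw [← summable_nat_add_iff 1]
    simp_rw [hfj]
    exact ((summable_geometric_of_lt_one hq0 hq).mul_left (p * s))
  -- integrability on ν
  have hgmeas : Measurable (fun m : ℕ => s ^ m) := measurable_from_nat
  have hInt : Integrable (fun m : ℕ => s ^ m) ν := by
    constructor
    · exact hgmeas.aestronglyMeasurable
    · show (∫⁻ m : ℕ, (‖s ^ m‖₊ : ℝ≥0∞) ∂ν) < ⊤
      rw [lintegral_countable']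
      have hterm : ∀ m : ℕ, (‖s ^ m‖₊ : ℝ≥0∞) * ν {m} = ENNReal.ofReal (f m) := by
        intro m
        cases m with
        | zero => simp [hν0, hf0]
        | succ j =>
          rw [hνj j, ← enorm_eq_nnnorm, Real.enorm_eq_ofReal (pow_nonneg hs0.le (j + 1)),
            ← ENNReal.ofReal_mul (pow_nonneg hs0.le (j + 1)), hfj j]
          congr 1
          rw [mul_pow, pow_succ]
          ring
      calc ∑' m : ℕ, (‖s ^ m‖₊ : ℝ≥0∞) * ν {m} = ∑' m : ℕ, ENNReal.ofReal (f m) := by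
            simp_rw [hterm]
        _ = ENNReal.ofReal (∑' m, f m) :=
            (ENNReal.ofReal_tsum_of_nonneg (fun m => by
              rw [hf]; exact mul_nonneg ENNReal.toReal_nonneg (pow_nonneg hs0.le m))
              hfsummable).symm
        _ < ⊤ := ENNReal.ofReal_lt_top
  -- value of the integral on ν
  have hval : ∫ m : ℕ, s ^ m ∂ν = p * s / (1 - (1 - p) * s) := by
    rw [integral_countable' hInt]
    have : ∑' m : ℕ, ν.real {m} • s ^ m = ∑' m, f m := by
      apply tsum_congr; intro m; rw [hf, smul_eq_mul, measureReal_def]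
    rw [this, Summable.tsum_eq_zero_add hfsummable, hf0, zero_add]
    simp_rw [hfj]
    rw [tsum_mul_left, tsum_geometric_of_lt_one hq0 hq]
    rw [div_eq_mul_inv]
  -- transfer back to μ
  have hcomp : ∀ ω, Real.exp (Real.log s * (W ω : ℝ)) = (fun m : ℕ => s ^ m) (W ω) := by
    intro ω; exact hexp (W ω)
  constructor
  · have := (integrable_map_measure hgmeas.aestronglyMeasurable hW.aemeasurable).mp
      (by rw [← hν]; exact hInt)
    refine this.congr (Filter.Eventually.of_forall fun ω => ?_)
    exact (hcomp ω).symm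
  · calc ∫ ω, Real.exp (Real.log s * (W ω : ℝ)) ∂μ
        = ∫ ω, (fun m : ℕ => s ^ m) (W ω) ∂μ :=
          integral_congr_ae (Filter.Eventually.of_forall fun ω =>
            by simpa using hcomp ω)
      _ = ∫ m : ℕ, s ^ m ∂ν := (integral_map hW.aemeasurable hgmeas.aestronglyMeasurable).symm
      _ = p * s / (1 - (1 - p) * s) := hval

set_option maxHeartbeats 1000000 in
/-- Tail bound for a sum of `n` i.i.d. geometric random variables with success
probability `p` and support `{1,2,3,…}` (so `E[Y] = n/p`): for every `k ≥ 1`,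
`P[Y ≥ k·E[Y]] ≤ exp(−k·n·(1−1/k)²/2)`. -/
theorem stmt1 {Ω : Type*} [MeasurableSpace Ω] (μ : Measure Ω) [IsProbabilityMeasure μ]
    (n : ℕ) (hn : 1 ≤ n) (p : ℝ) (hp0 : 0 < p) (hp1 : p ≤ 1)
    (Y : Fin n → Ω → ℕ) (hmeas : ∀ i, Measurable (Y i))
    (hind : iIndepFun Y μ)
    (hgeom : ∀ i, ∀ j : ℕ, 1 ≤ j →
      μ {ω | Y i ω = j} = ENNReal.ofReal ((1 - p) ^ (j - 1) * p))
    (k : ℝ) (hk : 1 ≤ k) :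
    μ {ω | k * (n / p) ≤ ∑ i, (Y i ω : ℝ)} ≤
      ENNReal.ofReal (Real.exp (-(k * n * (1 - 1 / k) ^ 2) / 2)) := by
  have hk0 : (0:ℝ) < k := lt_of_lt_of_le one_pos hk
  have hden : (0:ℝ) < k - p * (k - 1) := by nlinarith
  set s : ℝ := k / (k - p * (k - 1)) with hs
  have hs1 : 1 ≤ s := by
    rw [hs, le_div_iff₀ hden]
    nlinarith
  have hs0 : (0:ℝ) < s := lt_of_lt_of_le one_pos hs1
  have hq : (1 - p) * s < 1 := by
    rw [hs, ← mul_div_assoc, div_lt_one hden]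
    nlinarith
  have h1q : 1 - (1 - p) * s = p * s / k := by
    rw [hs]
    field_simp
    ring
  set t : ℝ := Real.log s with ht
  have ht0 : 0 ≤ t := Real.log_nonneg hs1
  set X : Fin n → Ω → ℝ := fun i ω => (Y i ω : ℝ) with hX
  have hXmeas : ∀ i, Measurable (X i) := fun i => measurable_from_nat.comp (hmeas i)
  have hindX : iIndepFun X μ :=
    hind.comp (fun _ (m : ℕ) => (m : ℝ)) (fun _ => measurable_from_nat)
  have hmgf : ∀ i, Integrable (fun ω => Real.exp (t * X i ω)) μ ∧
      ∫ ω, Real.exp (t * X i ω) ∂μ = p * s / (1 - (1 - p) * s) := fun i =>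
    geom_mgf μ p hp0 hp1 (Y i) (hmeas i) (hgeom i) s hs1 hq
  have hmgfk : ∀ i, mgf (X i) μ t = k := by
    intro i
    have hps : p * s ≠ 0 := by positivity
    rw [mgf, (hmgf i).2, h1q, div_div_eq_mul_div, mul_comm (p * s) k, mul_div_assoc,
      div_self hps, mul_one]
  -- integrability of the sum
  have hIntSum : Integrable (fun ω => Real.exp (t * (∑ i, X i) ω)) μ :=
    hindX.integrable_exp_mul_sum hXmeas (fun i _ => (hmgf i).1)
  -- Chernoff
  have hchern := measure_ge_le_exp_mul_mgf (X := ∑ i, X i) (μ := μ) (t := t)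
    (k * (n / p)) ht0 hIntSum
  have hmgfsum : mgf (∑ i, X i) μ t = k ^ n := by
    rw [hindX.mgf_sum hXmeas Finset.univ]
    rw [Finset.prod_congr rfl (fun i _ => hmgfk i)]
    simp
  rw [hmgfsum] at hchern
  have hsetEq : {ω | k * (↑n / p) ≤ (∑ i, X i) ω} = {ω | k * (↑n / p) ≤ ∑ i, (Y i ω : ℝ)} := by
    ext ω
    simp only [Set.mem_setOf_eq, Finset.sum_apply, hX]
  rw [hsetEq] at hchern
  -- final numeric inequality
  have hfinal : Real.exp (-t * (k * (↑n / p))) * k ^ n ≤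
      Real.exp (-(k * ↑n * (1 - 1 / k) ^ 2) / 2) := by
    have hkn : (k:ℝ) ^ n = Real.exp (n * Real.log k) := by
      rw [Real.exp_nat_mul, Real.exp_log hk0]
    rw [hkn, ← Real.exp_add, Real.exp_le_exp]
    have hn1 : (1:ℝ) ≤ (n:ℝ) := by exact_mod_cast hn
    have hn0 : (0:ℝ) < (n:ℝ) := by linarith
    -- key: t * (k / p) ≥ log k + (k-1)^2/(2k)
    set x : ℝ := p * (k - 1) / k with hxdef
    have hx0 : 0 ≤ x := by
      rw [hxdef]
      exact div_nonneg (mul_nonneg hp0.le (by linarith)) hk0.le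
    have hx1 : x < 1 := by
      rw [hxdef, div_lt_one hk0]; nlinarith
    have hsx : s = (1 - x)⁻¹ := by
      have h1x : 1 - x = (k - p * (k - 1)) / k := by
        rw [hxdef]; field_simp
      rw [hs, h1x, inv_div]
    have htx : t = -Real.log (1 - x) := by
      rw [ht, hsx, Real.log_inv]
    have hlog1 := aux_log_one_sub hx0 hx1
    have ht_ge : x + x ^ 2 / 2 ≤ t := by rw [htx]; linarith
    have hlogk := aux_log_le hk
    have hkinv : k * k⁻¹ = 1 := mul_inv_cancel₀ (ne_of_gt hk0)
    -- t * (k/p) ≥ (x + x²/2) * (k/p) = (k-1) + p (k-1)² / (2k)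
    have hxval : x * (k / p) = k - 1 := by
      rw [hxdef]; field_simp
    have hx2val : x ^ 2 / 2 * (k / p) = p * (k - 1) ^ 2 / (2 * k) := by
      rw [hxdef]; field_simp
    have hineq1 : (k - 1) + p * (k - 1) ^ 2 / (2 * k) ≤ t * (k / p) := by
      have hkp : 0 ≤ k / p := by positivity
      have := mul_le_mul_of_nonneg_right ht_ge hkp
      rw [add_mul, hxval, hx2val] at this
      linarith
    have hineq2 : Real.log k + (k - 1) ^ 2 / (2 * k) ≤ k - 1 := by
      have h1 : (k - 1) ^ 2 / (2 * k) = (k - 1) - (k / 2 - 1 / 2 * k⁻¹) := by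
        field_simp; ring
      rw [h1]; linarith
    have hineq3 : p * (k - 1) ^ 2 / (2 * k) ≥ 0 := by positivity
    have hkey : Real.log k + (k - 1) ^ 2 / (2 * k) ≤ t * (k / p) := by linarith
    -- now conclude: -t * (k * (n/p)) + n * log k ≤ -(k * n * (1 - 1/k)^2) / 2
    have hsq : k * (n:ℝ) * (1 - 1 / k) ^ 2 = (n:ℝ) * ((k - 1) ^ 2 / k) := by
      field_simp
    have h2 : (k - 1) ^ 2 / (2 * k) = (k - 1) ^ 2 / k / 2 := by ring
    have hmuln := mul_le_mul_of_nonneg_left hkey hn0.le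
    have hrw : -t * (k * (↑n / p)) = -(↑n * (t * (k / p))) := by ring
    rw [hrw, hsq]
    have hexpand : (n:ℝ) * (Real.log k + (k - 1) ^ 2 / (2 * k)) =
        ↑n * Real.log k + ↑n * ((k - 1) ^ 2 / k) / 2 := by ring
    linarith [hmuln]
  calc μ {ω | k * (↑n / p) ≤ ∑ i, (Y i ω : ℝ)}
      ≤ ENNReal.ofReal (Real.exp (-t * (k * (↑n / p))) * k ^ n) := by
        rw [ENNReal.le_ofReal_iff_toReal_le (measure_ne_top μ _)
          (mul_nonneg (Real.exp_nonneg _) (pow_nonneg hk0.le n))]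
        exact hchern
    _ ≤ ENNReal.ofReal (Real.exp (-(k * ↑n * (1 - 1 / k) ^ 2) / 2)) :=
        ENNReal.ofReal_le_ofReal hfinal
end

section
/- Let V and E be positive reals with E ≥ V, let ℓ ∈ ℕ, let N be a positive integer with N ≤ (5/6)^ℓ · V, and let d₁,…,d_N be positive reals with ∑_{i=1}^{N} dᵢ ≤ 2E. Then ∑_{i=1}^{N} log₂ dᵢ ≤ (5/6)^ℓ · (1.07 + ℓ·log₂(6/5)) · V · log₂(2E/V). -/
set_option maxHeartbeats 1000000

open Real Finset

/-- `log y ≤ y / e` for positive `y`. -/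
lemma aux_log_le_div_e {y : ℝ} (hy : 0 < y) : Real.log y ≤ y / Real.exp 1 := by
  have h := Real.log_le_sub_one_of_pos (show 0 < y / Real.exp 1 by positivity)
  have hl : Real.log (y / Real.exp 1) = Real.log y - 1 := by
    rw [Real.log_div hy.ne' (Real.exp_pos 1).ne', Real.log_exp]
  linarith [hl ▸ h]

lemma aux_n0 {e1 L2 : ℝ} (he1l : (2.718 : ℝ) < e1) (hL2l : (0.6931 : ℝ) < L2) :
    2 ≤ 1.07 * (e1 * L2) := by nlinarith

lemma aux_n1 {e1 L2 μ : ℝ} (he1l : (2.718 : ℝ) < e1) (hL2l : (0.6931 : ℝ) < L2)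
    (hμ1 : (1 : ℝ) / 6 ≤ μ) : 2 ≤ 5 / 6 * (e1 * (1.07 * L2 + μ)) := by nlinarith

lemma aux_n2 {L2 μ : ℝ} (hL2l : (0.6931 : ℝ) < L2) (hL2u : L2 < 0.6932)
    (hμ1 : (1 : ℝ) / 6 ≤ μ) (hμ2 : μ ≤ 1 / 5) :
    L2 ≤ (1.07 * L2 + μ) * (1 - μ) := by
  nlinarith [mul_nonneg (by linarith : (0:ℝ) ≤ μ - 1/6) (by linarith : (0:ℝ) ≤ 1/5 - μ)]

/-- Per-level depth bound: if `N ≤ (5/6)^ℓ·V` clusters have cut sizes `dᵢ > 0` summing to at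
most `2E` (with `E ≥ V > 0`), then
`∑ log₂ dᵢ ≤ (5/6)^ℓ·(1.07 + ℓ·log₂(6/5))·V·log₂(2E/V)`. -/
theorem stmt13 (V E : ℝ) (hV : 0 < V) (hE : V ≤ E) (ℓ : ℕ)
    (N : ℕ) (hN : 0 < N) (hNle : (N : ℝ) ≤ (5 / 6) ^ ℓ * V)
    (d : Fin N → ℝ) (hd : ∀ i, 0 < d i) (hsum : ∑ i, d i ≤ 2 * E) :
    ∑ i, Real.logb 2 (d i) ≤
      (5 / 6) ^ ℓ * (1.07 + (ℓ : ℝ) * Real.logb 2 (6 / 5)) * V * Real.logb 2 (2 * E / V) := by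
  have hE0 : 0 < E := lt_of_lt_of_le hV hE
  have hL2 : 0 < Real.log 2 := Real.log_pos (by norm_num)
  set μ : ℝ := Real.log (6 / 5) with hμdef
  have h56 : Real.log (5 / 6 : ℝ) = -μ := by
    rw [hμdef, ← Real.log_inv]; norm_num
  have hμ1 : (1 : ℝ) / 6 ≤ μ := by
    have h := Real.log_le_sub_one_of_pos (show (0:ℝ) < 5 / 6 by norm_num)
    rw [h56] at h; linarith
  have hμ2 : μ ≤ 1 / 5 := by
    have h := Real.log_le_sub_one_of_pos (show (0:ℝ) < 6 / 5 by norm_num)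
    linarith
  set c : ℝ := (5 / 6) ^ ℓ with hcdef
  have hc0 : 0 < c := by positivity
  have hc1 : c ≤ 1 := pow_le_one₀ (by norm_num) (by norm_num)
  have hlogc : Real.log c = -((ℓ : ℝ) * μ) := by
    rw [hcdef, Real.log_pow, h56]; ring
  set K : ℝ := 1.07 + (ℓ : ℝ) * (μ / Real.log 2) with hKdef
  set u : ℝ := Real.log (2 * E / V) with hudef
  have hu2 : Real.log 2 ≤ u := by
    apply Real.log_le_log (by norm_num)
    rw [le_div_iff₀ hV]; linarith
  have hu0 : 0 < u := lt_of_lt_of_le hL2 hu2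
  set x : ℝ := (N : ℝ) with hxdef
  have hx0 : (0 : ℝ) < x := by simp only [hxdef]; exact_mod_cast hN
  set S : ℝ := ∑ i, d i with hSdef
  have hS0 : 0 < S := Finset.sum_pos (fun i _ => hd i) ⟨⟨0, hN⟩, Finset.mem_univ _⟩
  -- Step 1: Jensen
  have jensen : ∑ i, Real.log (d i) ≤ x * Real.log (S / x) := by
    have hcon := (strictConcaveOn_log_Ioi.concaveOn).le_map_sum
      (t := Finset.univ) (w := fun _ : Fin N => (x)⁻¹) (p := d)
      (fun i _ => by positivity)
      (by simp [Finset.sum_const, Finset.card_univ]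
          exact mul_inv_cancel₀ hx0.ne')
      (fun i _ => Set.mem_Ioi.2 (hd i))
    simp only [smul_eq_mul] at hcon
    have hsum2 : (∑ i, x⁻¹ * d i) = S / x := by
      rw [← Finset.mul_sum, inv_mul_eq_div]
    rw [hsum2] at hcon
    have h2 : ∑ i, x⁻¹ * Real.log (d i) = x⁻¹ * ∑ i, Real.log (d i) :=
      (Finset.mul_sum _ _ _).symm
    rw [h2] at hcon
    calc ∑ i, Real.log (d i) = x * (x⁻¹ * ∑ i, Real.log (d i)) := by
          field_simp
      _ ≤ x * Real.log (S / x) := by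
          exact mul_le_mul_of_nonneg_left hcon hx0.le
  -- Step 2: monotonicity
  have step2 : x * Real.log (S / x) ≤ x * Real.log (2 * E / x) := by
    apply mul_le_mul_of_nonneg_left _ hx0.le
    apply Real.log_le_log (by positivity)
    gcongr
  -- Step 3: the key bound
  have key : x * Real.log (2 * E / x) ≤ c * K * V * u := by
    have hxM : x ≤ c * V := hNle
    have hcV0 : 0 < c * V := by positivity
    have hlx : Real.log (2 * E / x) = Real.log (2 * E) - Real.log x :=
      Real.log_div (by positivity) hx0.ne'
    have hlM : Real.log (2 * E / (c * V)) = Real.log (2 * E) - Real.log (c * V) :=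
      Real.log_div (by positivity) hcV0.ne'
    have hlMu : Real.log (2 * E) - Real.log (c * V) = u + (ℓ : ℝ) * μ := by
      rw [Real.log_mul hc0.ne' hV.ne', hudef,
        Real.log_div (by positivity : (2 * E : ℝ) ≠ 0) hV.ne', hlogc]
      ring
    have hKu : u + (ℓ : ℝ) * μ ≤ K * u := by
      have h1 : (ℓ : ℝ) * μ ≤ (ℓ : ℝ) * μ * (u / Real.log 2) := by
        have hq : (1 : ℝ) ≤ u / Real.log 2 := (one_le_div hL2).2 hu2
        have hlμ : (0:ℝ) ≤ (ℓ : ℝ) * μ := mul_nonneg (Nat.cast_nonneg ℓ) (by linarith)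
        linarith [mul_nonneg hlμ (sub_nonneg.2 hq)]
      have h2 : K * u = 1.07 * u + (ℓ : ℝ) * μ * (u / Real.log 2) := by
        rw [hKdef]; ring
      rw [h2]; linarith [h1, hu0]
    rcases le_or_gt (Real.exp 1 * (c * V)) (2 * E) with hcase | hcase
    · -- Case A: c·V ≤ 2E/e, use monotonicity-style bound
      have hge1 : 1 ≤ Real.log (2 * E) - Real.log (c * V) := by
        have := Real.log_le_log (by positivity) hcase
        rw [Real.log_mul (Real.exp_pos 1).ne' hcV0.ne', Real.log_exp] at this
        linarith
      have hxlog : x * (Real.log (c * V) - Real.log x) ≤ c * V - x := by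
        have h := Real.log_le_sub_one_of_pos (show 0 < c * V / x by positivity)
        rw [Real.log_div hcV0.ne' hx0.ne'] at h
        have := mul_le_mul_of_nonneg_left h hx0.le
        calc x * (Real.log (c * V) - Real.log x) ≤ x * (c * V / x - 1) := this
          _ = c * V - x := by field_simp
      have hA : x * Real.log (2 * E / x) ≤ c * V * (Real.log (2 * E) - Real.log (c * V)) := by
        rw [hlx]
        have hprod : 0 ≤ (c * V - x) * ((Real.log (2 * E) - Real.log (c * V)) - 1) :=
          mul_nonneg (by linarith) (by linarith)
        linarith [hxlog, hprod]
      calc x * Real.log (2 * E / x) ≤ c * V * (Real.log (2 * E) - Real.log (c * V)) := hA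
        _ = c * V * (u + (ℓ : ℝ) * μ) := by rw [hlMu]
        _ ≤ c * V * (K * u) := mul_le_mul_of_nonneg_left hKu hcV0.le
        _ = c * K * V * u := by ring
    · -- Case B: 2E < e·c·V
      set e1 : ℝ := Real.exp 1 with he1def
      have he1 : 0 < e1 := Real.exp_pos 1
      have hub : x * Real.log (2 * E / x) ≤ 2 * E / e1 := by
        have h := aux_log_le_div_e (show 0 < 2 * E / x by positivity)
        have := mul_le_mul_of_nonneg_left h hx0.le
        calc x * Real.log (2 * E / x) ≤ x * (2 * E / x / e1) := this
          _ = 2 * E / e1 := by field_simp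
      -- ℓ ≤ 1
      have h2ec : 2 < e1 * c := by
        have h1 : 2 * V ≤ 2 * E := by linarith
        have h2 : 2 * E < e1 * c * V := by
          calc 2 * E < e1 * (c * V) := hcase
            _ = e1 * c * V := by ring
        exact (mul_lt_mul_iff_left₀ hV).mp (by linarith)
      have hl1 : ℓ ≤ 1 := by
        by_contra h
        push_neg at h
        have hc' : c ≤ (5 / 6 : ℝ) ^ 2 := by
          rw [hcdef]
          exact pow_le_pow_of_le_one (by norm_num) (by norm_num) h
        have hee : e1 < 2.7182818286 := by rw [he1def]; exact Real.exp_one_lt_d9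
        have hmul : e1 * c ≤ e1 * ((5 / 6 : ℝ) ^ 2) := mul_le_mul_of_nonneg_left hc' he1.le
        have h36 : ((5 / 6 : ℝ) ^ 2) = 25 / 36 := by norm_num
        rw [h36] at hmul
        linarith [hmul, h2ec, he1]
      have hlcast : (ℓ : ℝ) ≤ 1 := by exact_mod_cast hl1
      have hl0 : (0 : ℝ) ≤ (ℓ : ℝ) := Nat.cast_nonneg ℓ
      -- set up convexity interpolation
      set u₁ : ℝ := 1 - (ℓ : ℝ) * μ with hu1def
      have hexpu1 : Real.exp u₁ = e1 * c := by
        rw [hu1def, show (1 : ℝ) - (ℓ : ℝ) * μ = 1 + Real.log c by rw [hlogc]; ring,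
          Real.exp_add, Real.exp_log hc0]
      have hu1L2 : Real.log 2 < u₁ := by
        have : (ℓ : ℝ) * μ ≤ 1 / 5 := by
          have := mul_le_mul hlcast hμ2 (by linarith) zero_le_one
          linarith
        have := Real.log_two_lt_d9
        rw [hu1def]; linarith
      have huu1 : u < u₁ := by
        have hexpu : Real.exp u = 2 * E / V := Real.exp_log (by positivity)
        have : Real.exp u < Real.exp u₁ := by
          rw [hexpu, hexpu1, div_lt_iff₀ hV]
          calc 2 * E < e1 * (c * V) := hcase
            _ = e1 * c * V := by ring
        exact Real.exp_lt_exp.mp this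
      set D : ℝ := u₁ - Real.log 2 with hDdef
      have hD0 : 0 < D := by rw [hDdef]; linarith
      set a : ℝ := (u₁ - u) / D with hadef
      set b : ℝ := (u - Real.log 2) / D with hbdef
      have ha : 0 ≤ a := by apply div_nonneg _ hD0.le; linarith
      have hb : 0 ≤ b := by apply div_nonneg _ hD0.le; linarith
      have habs : a + b = 1 := by rw [hadef, hbdef, hDdef]; field_simp; exact (div_eq_one_iff_eq (sub_pos.2 hu1L2).ne').2 (by ring)
      have hab : a * Real.log 2 + b * u₁ = u := by
        rw [hadef, hbdef]; field_simp; ring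
      have hconv : Real.exp u ≤ a * 2 + b * (e1 * c) := by
        have h := convexOn_exp.2 (Set.mem_univ (Real.log 2)) (Set.mem_univ u₁) ha hb habs
        simp only [smul_eq_mul] at h
        rw [hab, Real.exp_log (by norm_num : (0:ℝ) < 2), hexpu1] at h
        exact h
      -- the two numeric endpoint inequalities
      have he1l : (2.718 : ℝ) < e1 := by
        have := Real.exp_one_gt_d9; rw [he1def]; linarith
      have hL2l : (0.6931 : ℝ) < Real.log 2 := by linarith [Real.log_two_gt_d9]
      have hL2u : Real.log 2 < (0.6932 : ℝ) := by linarith [Real.log_two_lt_d9]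
      have hKL2 : K * Real.log 2 = 1.07 * Real.log 2 + (ℓ : ℝ) * μ := by
        rw [hKdef]; field_simp
      have h2 : 2 ≤ e1 * c * (K * Real.log 2) := by
        rw [hKL2]
        rcases Nat.le_one_iff_eq_zero_or_eq_one.mp hl1 with h | h <;> subst h
        · simp only [hcdef, pow_zero, Nat.cast_zero]
          linarith [aux_n0 he1l hL2l]
        · simp only [hcdef, pow_one, Nat.cast_one]
          linarith [aux_n1 he1l hL2l hμ1]
      have h3 : 1 ≤ K * u₁ := by
        rw [← mul_le_mul_iff_left₀ hL2, one_mul]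
        have : K * u₁ * Real.log 2 = (1.07 * Real.log 2 + (ℓ : ℝ) * μ) * u₁ := by
          rw [mul_comm (K * u₁) (Real.log 2), ← mul_assoc, mul_comm (Real.log 2) K, hKL2]
        rw [this, hu1def]
        rcases Nat.le_one_iff_eq_zero_or_eq_one.mp hl1 with h | h <;> subst h
        · simp only [Nat.cast_zero]
          linarith [hL2l]
        · simp only [Nat.cast_one]
          linarith [aux_n2 hL2l hL2u hμ1 hμ2]
      -- combine
      have h2E : 2 * E = V * Real.exp u := by
        rw [Real.exp_log (by positivity)]; field_simp
      have hfin : 2 * E ≤ c * K * V * u * e1 := by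
        calc 2 * E = V * Real.exp u := h2E
          _ ≤ V * (a * 2 + b * (e1 * c)) := mul_le_mul_of_nonneg_left hconv hV.le
          _ ≤ V * (a * (e1 * c * (K * Real.log 2)) + b * (e1 * c * (K * u₁))) := by
              apply mul_le_mul_of_nonneg_left _ hV.le
              apply add_le_add
              · exact mul_le_mul_of_nonneg_left h2 ha
              · apply mul_le_mul_of_nonneg_left _ hb
                have h3' := mul_le_mul_of_nonneg_left h3 (mul_pos he1 hc0).le
                rw [mul_one] at h3'
                linarith [h3']
          _ = c * K * V * (a * Real.log 2 + b * u₁) * e1 := by ring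
          _ = c * K * V * u * e1 := by rw [hab]
      calc x * Real.log (2 * E / x) ≤ 2 * E / e1 := hub
        _ ≤ c * K * V * u := by rw [div_le_iff₀ he1]; exact hfin
  -- assemble
  have main : ∑ i, Real.log (d i) ≤ c * K * V * u := le_trans jensen (le_trans step2 key)
  have hgoal : (5 / 6 : ℝ) ^ ℓ * (1.07 + (ℓ : ℝ) * Real.logb 2 (6 / 5)) * V * Real.logb 2 (2 * E / V)
      = c * K * V * u / Real.log 2 := by
    simp only [Real.logb, hKdef, hcdef, hudef, hμdef]
    field_simp
  rw [hgoal]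
  have hsum' : ∑ i, Real.logb 2 (d i) = (∑ i, Real.log (d i)) / Real.log 2 := by
    simp only [Real.logb, Finset.sum_div]
  rw [hsum']
  gcongr
end
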